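/- arXiv:2302.01655 — 2 statements merged into one kernel-verified Lean document; each statement's English description precedes it below -/
import Mathlib

section
/- Let F be a finite field with q elements and set η = 1 if q is odd and η = 0 if q is even. Then every *-symmetric monic irreducible polynomial over F other than X − 1 and X + 1 has even degree and constant coefficient 1. Moreover, for every n ≥ 1 the number π*(2n) of *-symmetric monic irreducible polynomials of degree 2n over F satisfies π*(2n) = (1/(2n))·∑_{odd d ∣ n} μ(d)·(q^{n/d} − η), and π*(2n) = (q^n − ε·q^{n/3})/(2n) for some real ε with 0 ≤ ε ≤ 3. -/
open Polynomial

/-- `f` is *-symmetric: `f(0) ≠ 0` and `f* = f`, where `f*(X) = Xⁿ f(1/X)/f(0)`,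
expressed via `f.reverse = f(0) • f`. -/
def IsStarSymm {F : Type} [Field F] (f : F[X]) : Prop :=
  f.coeff 0 ≠ 0 ∧ f.reverse = Polynomial.C (f.coeff 0) * f

lemma natPowSubOneDvdIff {q m j : ℕ} (hq : 2 ≤ q) (hm : 1 ≤ m) :
    q ^ m - 1 ∣ q ^ j - 1 ↔ m ∣ j := by
  constructor
  · revert j
    intro j
    induction j using Nat.strong_induction_on with
    | _ j ih =>
      intro h
      rcases Nat.lt_or_ge j m with hj | hj
      · have h3 : 1 ≤ q ^ j := Nat.one_le_pow _ _ (by omega)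
        have hpow : q ^ j < q ^ m := Nat.pow_lt_pow_right (by omega : 1 < q) hj
        rcases Nat.eq_zero_or_pos (q ^ j - 1) with h0 | h0
        · have hj1 : q ^ j = 1 := by
            have := Nat.le_of_sub_eq_zero h0
            exact le_antisymm this h3
          have : q = 1 ∨ j = 0 := by
            rcases Nat.eq_zero_or_pos j with rfl | hj0
            · right; rfl
            · left
              by_contra hq1
              have : q ≤ q ^ j := Nat.le_self_pow (by omega) q
              omega
          rcases this with h' | h'
          · omega
          · simp [h']
        · have hle := Nat.le_of_dvd h0 h
          have contra : q ^ j - 1 < q ^ m - 1 := by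
            generalize q ^ j = A at hpow h3 hle ⊢
            generalize q ^ m = B at hpow hle ⊢
            omega
          exact absurd hle (Nat.not_le.mpr contra)
      · have h1 : q ^ (j - m) * q ^ m = q ^ j := by
          rw [← pow_add]; congr 1; omega
        have h2 : q ^ (j - m) ≤ q ^ j := Nat.pow_le_pow_right (by omega) (by omega)
        have h3 : 1 ≤ q ^ (j - m) := Nat.one_le_pow _ _ (by omega)
        have h4 : 1 ≤ q ^ m := Nat.one_le_pow _ _ (by omega)
        have key : q ^ j - 1 = q ^ (j - m) * (q ^ m - 1) + (q ^ (j - m) - 1) := by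
          rw [Nat.mul_sub, h1, mul_one]
          generalize hA : q ^ (j - m) = A at h2 h3 ⊢
          generalize hB : q ^ j = B at h2 ⊢
          omega
        have hd : q ^ m - 1 ∣ q ^ (j - m) - 1 := by
          rw [key] at h
          exact (Nat.dvd_add_right (Dvd.dvd.mul_left dvd_rfl _)).mp h
        rcases Nat.eq_zero_or_pos j with rfl | hj0
        · exact dvd_zero m
        · have hddvd := ih (j - m) (by omega) hd
          have : j - m + m = j := by omega
          exact this ▸ Nat.dvd_add hddvd dvd_rfl
  · rintro ⟨s, rfl⟩
    simpa [one_pow, pow_mul] using Nat.sub_dvd_pow_sub_pow (q ^ m) 1 s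

variable {F : Type} [Field F] [Fintype F]

lemma exists_qpow_hom (K : Type) [Field K] [Algebra F K] (i : ℕ) :
    ∃ φ : K →+* K, ∀ y : K, φ y = y ^ (Fintype.card F) ^ i := by
  haveI : CharP F (ringChar F) := ringChar.charP F
  obtain ⟨r, hp, hcard⟩ := FiniteField.card F (ringChar F)
  haveI := Fact.mk hp
  haveI : CharP K (ringChar F) := charP_of_injective_algebraMap (algebraMap F K).injective _
  refine ⟨iterateFrobenius K (ringChar F) ((r : ℕ) * i), fun y => ?_⟩
  rw [iterateFrobenius_def, hcard, pow_mul]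

lemma aeval_qpow {K : Type} [Field K] [Algebra F K] (g : F[X]) (x : K) (i : ℕ) :
    aeval (x ^ (Fintype.card F) ^ i) g = (aeval x g) ^ (Fintype.card F) ^ i := by
  obtain ⟨φ, hφ⟩ := exists_qpow_hom (F := F) K i
  have hcomp : φ.comp (algebraMap F K) = algebraMap F K := by
    ext c
    rw [RingHom.comp_apply, hφ, ← map_pow, FiniteField.pow_card_pow]
  calc aeval (x ^ (Fintype.card F) ^ i) g = eval₂ (algebraMap F K) (φ x) g := by
        rw [aeval_def, hφ]
      _ = φ (eval₂ (algebraMap F K) x g) := by rw [hom_eval₂, hcomp]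
      _ = (aeval x g) ^ (Fintype.card F) ^ i := by rw [aeval_def, hφ]

variable [Fintype F]

lemma adjoin_facts {f : F[X]} (hmo : f.Monic) (hirr : Irreducible f) :
    ∃ _ : Fintype (AdjoinRoot f),
      Fintype.card (AdjoinRoot f) = (Fintype.card F) ^ f.natDegree := by
  haveI := Fact.mk hirr
  have hf0 : f ≠ 0 := hmo.ne_zero
  let pb := AdjoinRoot.powerBasis hf0
  letI : Fintype (AdjoinRoot f) := Module.fintypeOfFintype pb.basis
  refine ⟨inferInstance, ?_⟩
  rw [Module.card_eq_pow_finrank (K := F), pb.finrank, AdjoinRoot.powerBasis_dim]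

lemma root_qpow_eq_iff {f : F[X]} (hmo : f.Monic) (hirr : Irreducible f) (j : ℕ) :
    (AdjoinRoot.root f) ^ (Fintype.card F) ^ j = AdjoinRoot.root f ↔ f.natDegree ∣ j := by
  haveI := Fact.mk hirr
  obtain ⟨inst, hcard⟩ := adjoin_facts hmo hirr
  set q := Fintype.card F with hqdef
  have hq2 : 2 ≤ q := Fintype.one_lt_card
  have hdeg1 : 1 ≤ f.natDegree := (hmo.natDegree_pos).mpr hirr.ne_one
  constructor
  · intro h
    have hall : ∀ x : AdjoinRoot f, x ^ q ^ j = x := by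
      intro x
      obtain ⟨g, rfl⟩ := AdjoinRoot.mk_surjective x
      rw [← AdjoinRoot.aeval_eq, ← aeval_qpow, h]
    have hu : ∀ x : (AdjoinRoot f)ˣ, x ^ (q ^ j - 1) = 1 := by
      intro x
      have h1 : (1 : ℕ) ≤ q ^ j := Nat.one_le_pow _ _ (by omega)
      have hx : x ^ (q ^ j - 1) * x = x := by
        have : x ^ (q ^ j - 1) * x = x ^ (q ^ j - 1 + 1) := (pow_succ x _).symm
        rw [this, Nat.sub_add_cancel h1]
        ext
        push_cast
        exact hall x
      exact mul_right_cancel (by rw [hx, one_mul])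
    have hdvd := (FiniteField.forall_pow_eq_one_iff (AdjoinRoot f) (q ^ j - 1)).mp hu
    rw [hcard] at hdvd
    exact (natPowSubOneDvdIff hq2 hdeg1).mp hdvd
  · rintro ⟨s, rfl⟩
    rw [pow_mul, ← hcard]
    exact FiniteField.pow_card_pow s _

lemma conj_inj {f : F[X]} (hmo : f.Monic) (hirr : Irreducible f) {i j : ℕ}
    (hi : i < f.natDegree) (hj : j < f.natDegree)
    (h : (AdjoinRoot.root f) ^ (Fintype.card F) ^ i = (AdjoinRoot.root f) ^ (Fintype.card F) ^ j) :
    i = j := by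
  set q := Fintype.card F with hqdef
  set α := AdjoinRoot.root f with hα
  set m := f.natDegree with hm
  -- WLOG i ≤ j
  have key : ∀ i j : ℕ, i < m → j < m → i ≤ j →
      α ^ q ^ i = α ^ q ^ j → i = j := by
    intro i j hi hj hij h
    have hstep : α ^ q ^ (i + (m - j)) = α := by
      have h1 : (α ^ q ^ i) ^ q ^ (m - j) = (α ^ q ^ j) ^ q ^ (m - j) := by rw [h]
      rw [← pow_mul, ← pow_mul, ← pow_add, ← pow_add] at h1
      have h2 : j + (m - j) = m := by omega
      rw [h2] at h1
      have h3 : α ^ q ^ m = α := (root_qpow_eq_iff hmo hirr m).mpr dvd_rfl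
      rw [h3] at h1
      exact h1
    have hdvd := (root_qpow_eq_iff hmo hirr _).mp hstep
    have hpos : 0 < i + (m - j) := by omega
    have hle1 : f.natDegree ≤ i + (m - j) := Nat.le_of_dvd hpos hdvd
    have hle2 : i + (m - j) ≤ m := by omega
    omega
  rcases le_or_gt i j with hij | hij
  · exact key i j hi hj hij h
  · exact (key j i hj hi (le_of_lt hij) h.symm).symm

lemma root_eq_conj {f : F[X]} (hmo : f.Monic) (hirr : Irreducible f) {β : AdjoinRoot f}
    (hβ : aeval β f = 0) : ∃ i < f.natDegree, β = (AdjoinRoot.root f) ^ (Fintype.card F) ^ i := by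
  classical
  haveI := Fact.mk hirr
  have hroot : aeval (AdjoinRoot.root f) f = 0 := by
    rw [AdjoinRoot.aeval_eq, AdjoinRoot.mk_self]
  have hconj : ∀ i : ℕ, aeval ((AdjoinRoot.root f) ^ (Fintype.card F) ^ i) f = 0 := by
    intro i
    rw [aeval_qpow, hroot, zero_pow (by positivity)]
  have hmap0 : f.map (algebraMap F (AdjoinRoot f)) ≠ 0 :=
    (hmo.map (algebraMap F (AdjoinRoot f))).ne_zero
  have hmemroots : ∀ x : AdjoinRoot f, aeval x f = 0 →
      x ∈ (f.map (algebraMap F (AdjoinRoot f))).roots.toFinset := by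
    intro x hx
    rw [Multiset.mem_toFinset, mem_roots hmap0, IsRoot.def, eval_map, ← aeval_def]
    exact hx
  have hAcard : ((Finset.range f.natDegree).image
      (fun i => (AdjoinRoot.root f) ^ (Fintype.card F) ^ i)).card = f.natDegree := by
    rw [Finset.card_image_of_injOn, Finset.card_range]
    intro i hi j hj hij
    exact conj_inj hmo hirr (Finset.mem_range.mp hi) (Finset.mem_range.mp hj) hij
  have hAsub : ((Finset.range f.natDegree).image
      (fun i => (AdjoinRoot.root f) ^ (Fintype.card F) ^ i)) ⊆
      (f.map (algebraMap F (AdjoinRoot f))).roots.toFinset := by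
    intro x hx
    rw [Finset.mem_image] at hx
    obtain ⟨i, _, rfl⟩ := hx
    exact hmemroots _ (hconj i)
  have hRcard : (f.map (algebraMap F (AdjoinRoot f))).roots.toFinset.card ≤ f.natDegree := by
    calc (f.map (algebraMap F (AdjoinRoot f))).roots.toFinset.card
        ≤ Multiset.card (f.map (algebraMap F (AdjoinRoot f))).roots :=
          Multiset.toFinset_card_le _
    _ ≤ (f.map (algebraMap F (AdjoinRoot f))).natDegree := card_roots' _
    _ = f.natDegree := natDegree_map _
  have hAeq := Finset.eq_of_subset_of_card_le hAsub (by omega)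
  have hβA : β ∈ ((Finset.range f.natDegree).image
      (fun i => (AdjoinRoot.root f) ^ (Fintype.card F) ^ i)) := by
    rw [hAeq]; exact hmemroots β hβ
  rw [Finset.mem_image] at hβA
  obtain ⟨i, hi, hieq⟩ := hβA
  exact ⟨i, Finset.mem_range.mp hi, hieq.symm⟩

lemma dvd_iff_aeval_root {f g : F[X]} (hirr : Irreducible f) :
    f ∣ g ↔ aeval (AdjoinRoot.root f) g = 0 := by
  haveI := Fact.mk hirr
  rw [AdjoinRoot.aeval_eq, AdjoinRoot.mk_eq_zero]

lemma minpoly_root_eq {f : F[X]} (hmo : f.Monic) (hirr : Irreducible f) :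
    minpoly F (AdjoinRoot.root f) = f := by
  haveI := Fact.mk hirr
  rw [AdjoinRoot.minpoly_root hmo.ne_zero, hmo.leadingCoeff, inv_one, map_one, mul_one]

lemma eq_X_sub_one {f : F[X]} (hmo : f.Monic) (hirr : Irreducible f) {c : F}
    (h : AdjoinRoot.root f = algebraMap F (AdjoinRoot f) c) : f = X - C c := by
  haveI := Fact.mk hirr
  rw [← minpoly_root_eq hmo hirr, h, minpoly.eq_X_sub_C]

lemma starsymm_struct' {f : F[X]} (hmo : f.Monic) (hirr : Irreducible f) (hss : IsStarSymm f)
    (h1 : f ≠ X - 1) (h2 : f ≠ X + 1) :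
    ∃ d, 1 ≤ d ∧ f.natDegree = 2 * d ∧
      ∀ n, d ∣ n → Odd (n / d) →
        f ∣ (X : F[X]) ^ ((Fintype.card F) ^ n + 1) - 1 := by
  classical
  haveI := Fact.mk hirr
  have hf0 : f ≠ 0 := hmo.ne_zero
  have hroot : aeval (AdjoinRoot.root f) f = 0 := by
    rw [AdjoinRoot.aeval_eq, AdjoinRoot.mk_self]
  have hα0 : AdjoinRoot.root f ≠ 0 := by
    intro h0
    have heq : aeval (0 : AdjoinRoot f) f = algebraMap F _ (f.coeff 0) := by
      rw [aeval_def, eval₂_at_zero]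
    rw [h0] at hroot
    rw [hroot] at heq
    exact hss.1 ((map_eq_zero_iff _ (algebraMap F _).injective).mp heq.symm)
  haveI : Invertible (AdjoinRoot.root f) := invertibleOfNonzero hα0
  have hinvroot : aeval (⅟(AdjoinRoot.root f)) f = 0 := by
    have h' : eval₂ (algebraMap F _) (⅟(AdjoinRoot.root f)) f.reverse = 0 :=
      (eval₂_reverse_eq_zero_iff _ _ f).mpr (by rw [← aeval_def]; exact hroot)
    rw [hss.2, eval₂_mul, eval₂_C] at h'
    rcases mul_eq_zero.mp h' with h'' | h''
    · exact absurd h'' (by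
        simpa using (map_eq_zero_iff (algebraMap F (AdjoinRoot f))
          (algebraMap F _).injective).not.mpr hss.1)
    · rw [← aeval_def] at h''; exact h''
  obtain ⟨i, hi, hieq⟩ := root_eq_conj hmo hirr hinvroot
  have hE : (AdjoinRoot.root f) ^ (Fintype.card F) ^ i * (AdjoinRoot.root f) = 1 := by
    rw [← hieq]; exact invOf_mul_self _
  have hipos : 1 ≤ i := by
    rcases Nat.eq_zero_or_pos i with rfl | h
    · exfalso
      rw [pow_zero, pow_one] at hE
      rcases mul_self_eq_one_iff.mp hE with h' | h'
      · apply h1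
        have := eq_X_sub_one hmo hirr (c := 1) (by rw [h', map_one])
        rwa [C_1] at this
      · apply h2
        have := eq_X_sub_one hmo hirr (c := -1) (by rw [h', map_neg, map_one])
        rwa [map_neg, C_1, sub_neg_eq_add] at this
    · exact h
  -- derive α^(q^(i+i)) = α
  have hE2 : (AdjoinRoot.root f) ^ (Fintype.card F) ^ (i + i) *
      (AdjoinRoot.root f) ^ (Fintype.card F) ^ i = 1 := by
    have h' := congrArg (· ^ (Fintype.card F) ^ i) hE
    simpa [mul_pow, ← pow_mul, ← pow_add] using h'
  have hfix : (AdjoinRoot.root f) ^ (Fintype.card F) ^ (i + i) = AdjoinRoot.root f := by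
    have h3 : (AdjoinRoot.root f) ^ (Fintype.card F) ^ (i + i) *
        (AdjoinRoot.root f) ^ (Fintype.card F) ^ i =
        (AdjoinRoot.root f) * (AdjoinRoot.root f) ^ (Fintype.card F) ^ i := by
      rw [hE2, mul_comm _ ((AdjoinRoot.root f) ^ (Fintype.card F) ^ i), hE]
    exact mul_right_cancel₀ (pow_ne_zero _ hα0) h3
  have hdvd2 := (root_qpow_eq_iff hmo hirr _).mp hfix
  have hii : i + i = f.natDegree := by
    have hle : f.natDegree ≤ i + i := Nat.le_of_dvd (by omega) hdvd2
    have hsub : f.natDegree ∣ (i + i - f.natDegree) := Nat.dvd_sub hdvd2 dvd_rfl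
    have hlt : i + i - f.natDegree < f.natDegree := by omega
    have := Nat.eq_zero_of_dvd_of_lt hsub hlt
    omega
  refine ⟨i, hipos, by omega, ?_⟩
  intro n hdn hodd
  obtain ⟨k, hk⟩ := hdn
  have hk' : n / i = k := by rw [hk]; exact Nat.mul_div_cancel_left k (by omega)
  rw [hk'] at hodd
  obtain ⟨t, ht⟩ := hodd
  have hn' : n = f.natDegree * t + i := by rw [hk, ht, ← hii]; ring
  have hpow : (AdjoinRoot.root f) ^ (Fintype.card F) ^ n =
      (AdjoinRoot.root f) ^ (Fintype.card F) ^ i := by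
    rw [hn', pow_add, pow_mul]
    have hmt : (AdjoinRoot.root f) ^ (Fintype.card F) ^ (f.natDegree * t) =
        AdjoinRoot.root f := (root_qpow_eq_iff hmo hirr _).mpr ⟨t, rfl⟩
    rw [hmt]
  have hfin : (AdjoinRoot.root f) ^ ((Fintype.card F) ^ n + 1) = 1 := by
    rw [pow_add, pow_one, hpow, hE]
  rw [dvd_iff_aeval_root hirr]
  simp only [map_sub, map_pow, aeval_X, map_one, hfin, sub_self]

lemma half_degree {f : F[X]} (hmo : f.Monic) (hirr : Irreducible f)
    (h1 : f ≠ X - 1) (h2 : f ≠ X + 1) {i : ℕ} (hi : i < f.natDegree)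
    (hα0 : AdjoinRoot.root f ≠ 0)
    (hE : (AdjoinRoot.root f) ^ (Fintype.card F) ^ i * AdjoinRoot.root f = 1) :
    1 ≤ i ∧ i + i = f.natDegree := by
  classical
  haveI := Fact.mk hirr
  have hipos : 1 ≤ i := by
    rcases Nat.eq_zero_or_pos i with rfl | h
    · exfalso
      rw [pow_zero, pow_one] at hE
      rcases mul_self_eq_one_iff.mp hE with h' | h'
      · apply h1
        have := eq_X_sub_one hmo hirr (c := 1) (by rw [h', map_one])
        rwa [C_1] at this
      · apply h2
        have := eq_X_sub_one hmo hirr (c := -1) (by rw [h', map_neg, map_one])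
        rwa [map_neg, C_1, sub_neg_eq_add] at this
    · exact h
  have hE2 : (AdjoinRoot.root f) ^ (Fintype.card F) ^ (i + i) *
      (AdjoinRoot.root f) ^ (Fintype.card F) ^ i = 1 := by
    have h' := congrArg (· ^ (Fintype.card F) ^ i) hE
    simpa [mul_pow, ← pow_mul, ← pow_add] using h'
  have hfix : (AdjoinRoot.root f) ^ (Fintype.card F) ^ (i + i) = AdjoinRoot.root f := by
    have h3 : (AdjoinRoot.root f) ^ (Fintype.card F) ^ (i + i) *
        (AdjoinRoot.root f) ^ (Fintype.card F) ^ i =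
        (AdjoinRoot.root f) * (AdjoinRoot.root f) ^ (Fintype.card F) ^ i := by
      rw [hE2, mul_comm _ ((AdjoinRoot.root f) ^ (Fintype.card F) ^ i), hE]
    exact mul_right_cancel₀ (pow_ne_zero _ hα0) h3
  have hdvd2 := (root_qpow_eq_iff hmo hirr _).mp hfix
  refine ⟨hipos, ?_⟩
  have hle : f.natDegree ≤ i + i := Nat.le_of_dvd (by omega) hdvd2
  have hsub : f.natDegree ∣ (i + i - f.natDegree) := Nat.dvd_sub hdvd2 dvd_rfl
  have hlt : i + i - f.natDegree < f.natDegree := by omega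
  have := Nat.eq_zero_of_dvd_of_lt hsub hlt
  omega

lemma factor_starsymm {f : F[X]} {n : ℕ} (hn : 1 ≤ n) (hmo : f.Monic) (hirr : Irreducible f)
    (hdvd : f ∣ (X : F[X]) ^ ((Fintype.card F) ^ n + 1) - 1)
    (h1 : f ≠ X - 1) (h2 : f ≠ X + 1) :
    IsStarSymm f ∧ ∃ d, d ∣ n ∧ Odd (n / d) ∧ f.natDegree = 2 * d := by
  classical
  haveI := Fact.mk hirr
  have hf0 : f ≠ 0 := hmo.ne_zero
  have hdeg1 : 1 ≤ f.natDegree := (hmo.natDegree_pos).mpr hirr.ne_one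
  have hroot : aeval (AdjoinRoot.root f) f = 0 := by
    rw [AdjoinRoot.aeval_eq, AdjoinRoot.mk_self]
  have hunit : (AdjoinRoot.root f) ^ ((Fintype.card F) ^ n + 1) = 1 := by
    have h' := (dvd_iff_aeval_root hirr).mp hdvd
    simp only [map_sub, map_pow, aeval_X, map_one] at h'
    exact sub_eq_zero.mp h'
  have hα0 : AdjoinRoot.root f ≠ 0 := by
    intro h0
    rw [h0, zero_pow (by positivity)] at hunit
    exact zero_ne_one hunit
  have hmod : (AdjoinRoot.root f) ^ (Fintype.card F) ^ n =
      (AdjoinRoot.root f) ^ (Fintype.card F) ^ (n % f.natDegree) := by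
    conv_lhs => rw [show n = f.natDegree * (n / f.natDegree) + n % f.natDegree from
      (Nat.div_add_mod n f.natDegree).symm]
    rw [pow_add, pow_mul]
    rw [(root_qpow_eq_iff hmo hirr _).mpr ⟨n / f.natDegree, rfl⟩]
  have hE : (AdjoinRoot.root f) ^ (Fintype.card F) ^ (n % f.natDegree) *
      AdjoinRoot.root f = 1 := by
    rw [← hmod]
    rw [pow_add, pow_one] at hunit
    exact hunit
  have hilt : n % f.natDegree < f.natDegree := Nat.mod_lt n (by omega)
  obtain ⟨hipos, hii⟩ := half_degree hmo hirr h1 h2 hilt hα0 hE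
  -- the degree data
  have hn' : n = (n % f.natDegree) * (2 * (n / f.natDegree) + 1) := by
    have := Nat.div_add_mod n f.natDegree
    have h2' : f.natDegree = 2 * (n % f.natDegree) := by omega
    nlinarith [Nat.div_add_mod n f.natDegree]
  have hddvd : (n % f.natDegree) ∣ n := ⟨_, hn'⟩
  have hodd : Odd (n / (n % f.natDegree)) := by
    have hn'' : n = (2 * (n / f.natDegree) + 1) * (n % f.natDegree) := by
      conv_lhs => rw [hn']
      ring
    have hdivq : n / (n % f.natDegree) = 2 * (n / f.natDegree) + 1 :=
      Nat.div_eq_of_eq_mul_left (by omega) hn''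
    rw [hdivq]
    exact ⟨n / f.natDegree, by ring⟩
  -- star symmetry
  have hc0 : f.coeff 0 ≠ 0 := by
    intro hc
    have hXdvd : (X : F[X]) ∣ f := X_dvd_iff.mpr hc
    have hassoc := (irreducible_X (R := F)).associated_of_dvd hirr hXdvd
    have hXf : (X : F[X]) = f := eq_of_monic_of_associated monic_X hmo hassoc
    have h4 : aeval (AdjoinRoot.root f) (X : F[X]) = 0 := by rw [hXf]; exact hroot
    rw [aeval_X] at h4
    exact hα0 h4
  haveI : Invertible (AdjoinRoot.root f) := invertibleOfNonzero hα0
  have hinv : ⅟(AdjoinRoot.root f) =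
      (AdjoinRoot.root f) ^ (Fintype.card F) ^ (n % f.natDegree) :=
    invOf_eq_right_inv (by rw [mul_comm]; exact hE)
  have hfinv : eval₂ (algebraMap F (AdjoinRoot f)) (⅟(AdjoinRoot.root f)) f = 0 := by
    rw [← aeval_def, hinv, aeval_qpow, hroot, zero_pow (by positivity)]
  have hrev0 : aeval (AdjoinRoot.root f) f.reverse = 0 := by
    have h' := (eval₂_reverse_eq_zero_iff (algebraMap F (AdjoinRoot f))
      (⅟(AdjoinRoot.root f)) f).mpr hfinv
    rw [invOf_invOf] at h'
    rw [aeval_def]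
    exact h'
  have hfdvdrev : f ∣ f.reverse := (dvd_iff_aeval_root hirr).mpr hrev0
  have htr0 : f.natTrailingDegree = 0 := natTrailingDegree_eq_zero.mpr (Or.inr hc0)
  have hrevdeg : f.reverse.natDegree = f.natDegree := by
    rw [reverse_natDegree, htr0, Nat.sub_zero]
  have hrevne : f.reverse ≠ 0 := by
    intro h'
    have := coeff_zero_reverse f
    rw [h', hmo.leadingCoeff, coeff_zero] at this
    exact zero_ne_one this
  obtain ⟨g, hg⟩ := hfdvdrev
  have hg0 : g ≠ 0 := by rintro rfl; rw [mul_zero] at hg; exact hrevne hg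
  have hgdeg : g.natDegree = 0 := by
    have := natDegree_mul hf0 hg0
    rw [← hg, hrevdeg] at this
    omega
  have hgC : g = C (g.coeff 0) := eq_C_of_natDegree_eq_zero hgdeg
  have hgc : g.coeff 0 = f.coeff 0 := by
    have hl : f.reverse.leadingCoeff = f.coeff 0 := by
      rw [reverse_leadingCoeff, trailingCoeff, htr0]
    rw [hg, hgC] at hl
    rw [leadingCoeff_mul, leadingCoeff_C, hmo.leadingCoeff, one_mul] at hl
    exact hl
  have hss : IsStarSymm f := by
    refine ⟨hc0, ?_⟩
    rw [hg, hgC, hgc, mul_comm]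
  exact ⟨hss, ⟨n % f.natDegree, hddvd, hodd, by omega⟩⟩

lemma starsymm_coeff_zero {f : F[X]} (hmo : f.Monic) (hirr : Irreducible f) (hss : IsStarSymm f)
    (h1 : f ≠ X - 1) (h2 : f ≠ X + 1) : f.coeff 0 = 1 := by
  have h0 : (1 : F) = f.coeff 0 * f.coeff 0 := by
    have hcongr := congrArg (fun p : F[X] => p.coeff 0) hss.2
    simp only [coeff_zero_reverse, hmo.leadingCoeff, coeff_C_mul] at hcongr
    exact hcongr
  rcases mul_self_eq_one_iff.mp h0.symm with hc | hc
  · exact hc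
  · by_cases hchar : (-1 : F) = 1
    · rw [hc]; exact hchar
    · exfalso
      haveI : Invertible (1 : F) := invertibleOne
      have h' := eval₂_reverse_mul_pow (RingHom.id F) (1 : F) f
      rw [invOf_one, one_pow, mul_one, eval₂_eq_eval_map, eval₂_eq_eval_map, map_id, map_id] at h'
      have hev : eval 1 f.reverse = eval 1 f := h'
      rw [hss.2, hc] at hev
      rw [eval_mul, eval_C] at hev
      have hsum : (2 : F) * eval 1 f = 0 := by
        rw [two_mul]
        linear_combination -hev
      rcases mul_eq_zero.mp hsum with h2' | h2'
      · apply hchar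
        have h3 : (1 : F) + 1 = 0 := by linear_combination h2'
        linear_combination -h3
      · apply h1
        have hroot : IsRoot f 1 := h2'
        have hXdvd : (X - C (1 : F)) ∣ f := dvd_iff_isRoot.mpr hroot
        have hassoc := (irreducible_X_sub_C (1 : F)).associated_of_dvd hirr hXdvd
        have := eq_of_monic_of_associated (monic_X_sub_C 1) hmo hassoc
        rw [← this, C_1]

lemma odd_card_neg_one_ne_one (h : Odd (Fintype.card F)) : (-1 : F) ≠ 1 := by
  intro heq
  haveI : CharP F (ringChar F) := ringChar.charP F
  obtain ⟨r, hp, hcard⟩ := FiniteField.card F (ringChar F)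
  have h2 : (2 : F) = 0 := by linear_combination -heq
  have hdvd : ringChar F ∣ 2 := by
    have := (CharP.cast_eq_zero_iff F (ringChar F) 2).mp (by exact_mod_cast h2)
    exact this
  have hp2 : ringChar F = 2 := (Nat.prime_dvd_prime_iff_eq hp Nat.prime_two).mp hdvd
  rw [hp2] at hcard
  have : Even (Fintype.card F) := by
    rw [hcard]
    exact (Nat.even_pow).mpr ⟨even_two, by positivity⟩
  exact (Nat.not_even_iff_odd.mpr h) this

lemma even_card_neg_one_eq_one (h : ¬Odd (Fintype.card F)) : (-1 : F) = 1 := by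
  haveI : CharP F (ringChar F) := ringChar.charP F
  obtain ⟨r, hp, hcard⟩ := FiniteField.card F (ringChar F)
  have heven : Even (Fintype.card F) := Nat.not_odd_iff_even.mp h
  rw [hcard] at heven
  have hp2 : ringChar F = 2 := by
    have := (Nat.even_pow).mp heven
    rcases (Nat.Prime.even_iff hp).mp this.1 with h'
    exact h'
  have h2 : (2 : F) = 0 := by
    have := CharP.cast_eq_zero F (ringChar F)
    rw [hp2] at this
    exact_mod_cast this
  linear_combination -h2

def SS (F : Type) [Field F] (d : ℕ) : Set F[X] :=
  {f : F[X] | f.Monic ∧ Irreducible f ∧ IsStarSymm f ∧ f.natDegree = 2 * d}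

lemma main_identity (n : ℕ) (hn : 1 ≤ n) :
    (Fintype.card F) ^ n + 1 = 1 + (if Odd (Fintype.card F) then 1 else 0)
      + ∑ d ∈ n.divisors.filter (fun d => Odd (n / d)), 2 * d * (SS F d).ncard := by
  classical
  have hq2 : 2 ≤ Fintype.card F := Fintype.one_lt_card
  have hC1 : (1 : F[X]) = C 1 := (map_one C).symm
  have hNpos : 0 < Fintype.card F ^ n + 1 := by positivity
  have hmoP : ((X : F[X]) ^ (Fintype.card F ^ n + 1) - 1).Monic := by
    rw [hC1]; exact monic_X_pow_sub_C 1 (by omega)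
  have hP0 : ((X : F[X]) ^ (Fintype.card F ^ n + 1) - 1) ≠ 0 := hmoP.ne_zero
  have hNF : ((Fintype.card F ^ n + 1 : ℕ) : F) ≠ 0 := by
    have hq0 : ((Fintype.card F : ℕ) : F) = 0 := FiniteField.cast_card_eq_zero F
    push_cast
    rw [hq0, zero_pow (by omega), zero_add]
    exact one_ne_zero
  have hsep : ((X : F[X]) ^ (Fintype.card F ^ n + 1) - 1).Separable := by
    rw [hC1]; exact separable_X_pow_sub_C 1 hNF one_ne_zero
  have hnodup : (UniqueFactorizationMonoid.normalizedFactors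
      ((X : F[X]) ^ (Fintype.card F ^ n + 1) - 1)).Nodup :=
    (UniqueFactorizationMonoid.squarefree_iff_nodup_normalizedFactors hP0).mp hsep.squarefree
  set D : Finset F[X] := (UniqueFactorizationMonoid.normalizedFactors
      ((X : F[X]) ^ (Fintype.card F ^ n + 1) - 1)).toFinset with hD
  have hmemD : ∀ g : F[X], g ∈ D ↔ g.Monic ∧ Irreducible g ∧
      g ∣ (X : F[X]) ^ (Fintype.card F ^ n + 1) - 1 := by
    intro g
    constructor
    · intro hg
      rw [hD, Multiset.mem_toFinset] at hg
      have hirr := UniqueFactorizationMonoid.irreducible_of_normalized_factor g hg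
      have hnorm := UniqueFactorizationMonoid.normalize_normalized_factor g hg
      have hmon : g.Monic := by
        have := Polynomial.monic_normalize hirr.ne_zero
        rwa [hnorm] at this
      exact ⟨hmon, hirr, UniqueFactorizationMonoid.dvd_of_mem_normalizedFactors hg⟩
    · rintro ⟨hmon, hirr, hdvd⟩
      obtain ⟨g', hg', hass⟩ :=
        UniqueFactorizationMonoid.exists_mem_normalizedFactors_of_dvd hP0 hirr hdvd
      have hg'mon : g'.Monic := by
        have := Polynomial.monic_normalize
          (UniqueFactorizationMonoid.irreducible_of_normalized_factor g' hg').ne_zero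
        rwa [UniqueFactorizationMonoid.normalize_normalized_factor g' hg'] at this
      have hgg' : g = g' := eq_of_monic_of_associated hmon hg'mon hass
      rw [hD, Multiset.mem_toFinset, hgg']
      exact hg'
  have hdegsum : Fintype.card F ^ n + 1 = ∑ g ∈ D, g.natDegree := by
    have hassoc := UniqueFactorizationMonoid.prod_normalizedFactors hP0
    have hdeg : ((X : F[X]) ^ (Fintype.card F ^ n + 1) - 1).natDegree
        = Fintype.card F ^ n + 1 := by
      rw [hC1]; exact natDegree_X_pow_sub_C
    have hprodD : ∏ g ∈ D, g = (UniqueFactorizationMonoid.normalizedFactors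
        ((X : F[X]) ^ (Fintype.card F ^ n + 1) - 1)).prod := by
      rw [hD, Finset.prod_eq_multiset_prod, Multiset.toFinset_val,
        Multiset.map_id', Multiset.dedup_eq_self.mpr hnodup]
    have hdeq : (∏ g ∈ D, g).natDegree
        = ((X : F[X]) ^ (Fintype.card F ^ n + 1) - 1).natDegree := by
      rw [hprodD]
      exact natDegree_eq_of_degree_eq (degree_eq_degree_of_associated hassoc)
    rw [← hdeg, ← hdeq]
    rw [natDegree_prod]
    intro g hg
    exact ((hmemD g).mp hg).2.1.ne_zero
  have hX1 : (X - 1 : F[X]) ∈ D := by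
    rw [hmemD]
    refine ⟨by rw [hC1]; exact monic_X_sub_C 1, by rw [hC1]; exact irreducible_X_sub_C 1, ?_⟩
    rw [hC1]
    apply dvd_iff_isRoot.mpr
    simp
  have hX2 : Odd (Fintype.card F) → (X + 1 : F[X]) ∈ D := by
    intro hodd
    have hXp : (X + 1 : F[X]) = X - C (-1) := by rw [map_neg, C_1, sub_neg_eq_add]
    have hNeven : Even (Fintype.card F ^ n + 1) := by
      obtain ⟨t, ht⟩ := hodd.pow (n := n)
      exact ⟨t + 1, by omega⟩
    rw [hmemD]
    refine ⟨by rw [hXp]; exact monic_X_sub_C _, by rw [hXp]; exact irreducible_X_sub_C _, ?_⟩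
    rw [hXp]
    apply dvd_iff_isRoot.mpr
    show eval (-1) ((X : F[X]) ^ (Fintype.card F ^ n + 1) - 1) = 0
    rw [eval_sub, eval_pow, eval_X, eval_one, hNeven.neg_one_pow, sub_self]
  set E : Finset F[X] := if Odd (Fintype.card F) then {X - 1, X + 1} else {X - 1} with hE
  have hEsub : E ⊆ D := by
    rw [hE]; split_ifs with h
    · intro g hg
      rcases Finset.mem_insert.mp hg with rfl | hg'
      · exact hX1
      · rw [Finset.mem_singleton] at hg'
        rw [hg']
        exact hX2 h
    · intro g hg
      rw [Finset.mem_singleton] at hg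
      rw [hg]
      exact hX1
  have hdegX1 : (X - 1 : F[X]).natDegree = 1 := by rw [hC1]; exact natDegree_X_sub_C (1 : F)
  have hdegX2 : (X + 1 : F[X]).natDegree = 1 := by
    have hXc : (X + 1 : F[X]) = X + C (1 : F) := by rw [C_1]
    rw [hXc]
    exact natDegree_X_add_C (1 : F)
  have hEsum : ∑ g ∈ E, g.natDegree = 1 + (if Odd (Fintype.card F) then 1 else 0) := by
    rw [hE]
    split_ifs with h
    · have hne : (X - 1 : F[X]) ≠ X + 1 := by
        intro heq
        apply odd_card_neg_one_ne_one h
        have hco := congrArg (fun p : F[X] => p.coeff 0) heq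
        simp only [coeff_sub, coeff_add, coeff_X_zero, coeff_one, zero_sub, zero_add] at hco
        exact hco
      rw [Finset.sum_insert (by simp [hne]), Finset.sum_singleton, hdegX1, hdegX2]
    · rw [Finset.sum_singleton, hdegX1]
  have hDE : ∀ g ∈ D \ E, g.Monic ∧ Irreducible g ∧ IsStarSymm g ∧
      ∃ d, d ∣ n ∧ Odd (n / d) ∧ g.natDegree = 2 * d := by
    intro g hg
    rw [Finset.mem_sdiff] at hg
    obtain ⟨hgD, hgE⟩ := hg
    rw [hmemD] at hgD
    obtain ⟨hmon, hirr, hdvd⟩ := hgD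
    have hne1 : g ≠ X - 1 := by
      intro h'; apply hgE; rw [hE]; split_ifs <;> simp [h']
    have hne2 : g ≠ X + 1 := by
      intro h'
      apply hgE
      rw [hE]
      split_ifs with h
      · simp [h']
      · have hneg := even_card_neg_one_eq_one (F := F) h
        have hneg' : (-1 : F[X]) = 1 := by
          have hC : C (-1 : F) = C 1 := by rw [hneg]
          rw [map_neg, C_1] at hC
          exact hC
        have hXX : (X + 1 : F[X]) = X - 1 := by
          rw [sub_eq_add_neg, hneg']
        simp [h', hXX]
    obtain ⟨hss, hd⟩ := factor_starsymm hn hmon hirr hdvd hne1 hne2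
    exact ⟨hmon, hirr, hss, hd⟩
  have hfiber := Finset.sum_fiberwise_of_maps_to (g := fun g : F[X] => g.natDegree / 2)
    (t := n.divisors.filter (fun d => Odd (n / d))) (s := D \ E)
    (fun g hg => by
      obtain ⟨hmon, hirr, hss, d, hdn, hodd, hdeg⟩ := hDE g hg
      have hd1 : 1 ≤ d := Nat.pos_of_dvd_of_pos hdn (by omega)
      show g.natDegree / 2 ∈ Finset.filter (fun d => Odd (n / d)) n.divisors
      rw [hdeg, Nat.mul_div_cancel_left _ (by norm_num : 0 < 2)]
      rw [Finset.mem_filter, Nat.mem_divisors]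
      exact ⟨⟨hdn, by omega⟩, hodd⟩)
    (fun g => g.natDegree)
  have hfiberval : ∀ d ∈ n.divisors.filter (fun d => Odd (n / d)),
      ∑ g ∈ (D \ E).filter (fun g => g.natDegree / 2 = d), g.natDegree
        = 2 * d * (SS F d).ncard := by
    intro d hd
    rw [Finset.mem_filter, Nat.mem_divisors] at hd
    obtain ⟨⟨hdn, hn0⟩, hodd⟩ := hd
    have hd1 : 1 ≤ d := Nat.pos_of_dvd_of_pos hdn (by omega)
    have hsetEq : (((D \ E).filter (fun g => g.natDegree / 2 = d) : Finset F[X]) : Set F[X])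
        = SS F d := by
      ext g
      simp only [Finset.coe_filter, Set.mem_setOf_eq, SS]
      constructor
      · rintro ⟨hgDE, hghalf⟩
        obtain ⟨hmon, hirr, hss, d', hd'n, hodd', hdeg'⟩ := hDE g hgDE
        refine ⟨hmon, hirr, hss, ?_⟩
        rw [hdeg', Nat.mul_div_cancel_left _ (by norm_num : 0 < 2)] at hghalf
        rw [hdeg', hghalf]
      · rintro ⟨hmon, hirr, hss, hdeg⟩
        have hne1 : g ≠ X - 1 := by
          intro h'; rw [h', hdegX1] at hdeg; omega
        have hne2 : g ≠ X + 1 := by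
          intro h'; rw [h', hdegX2] at hdeg; omega
        obtain ⟨d'', hd''1, hdeg'', hdvdall⟩ := starsymm_struct' hmon hirr hss hne1 hne2
        have hdd : d'' = d := by omega
        rw [hdd] at hdvdall
        have hgdvd : g ∣ (X : F[X]) ^ (Fintype.card F ^ n + 1) - 1 := hdvdall n hdn hodd
        refine ⟨?_, ?_⟩
        · rw [Finset.mem_sdiff]
          refine ⟨(hmemD g).mpr ⟨hmon, hirr, hgdvd⟩, ?_⟩
          intro hgE
          rw [hE] at hgE
          split_ifs at hgE with h
          · rcases Finset.mem_insert.mp hgE with h' | h'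
            · exact hne1 h'
            · exact hne2 (Finset.mem_singleton.mp h')
          · exact hne1 (Finset.mem_singleton.mp hgE)
        · rw [hdeg, Nat.mul_div_cancel_left _ (by norm_num : 0 < 2)]
    have hcardeq : ((D \ E).filter (fun g => g.natDegree / 2 = d)).card = (SS F d).ncard := by
      rw [← hsetEq, Set.ncard_coe_finset]
    have hconst : ∀ g ∈ (D \ E).filter (fun g => g.natDegree / 2 = d),
        g.natDegree = 2 * d := by
      intro g hg
      have : g ∈ (((D \ E).filter (fun g => g.natDegree / 2 = d) : Finset F[X]) : Set F[X]) := hg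
      rw [hsetEq] at this
      exact this.2.2.2
    rw [Finset.sum_congr rfl hconst, Finset.sum_const, smul_eq_mul, hcardeq, mul_comm]
  calc Fintype.card F ^ n + 1 = ∑ g ∈ D, g.natDegree := hdegsum
    _ = ∑ g ∈ D \ E, g.natDegree + ∑ g ∈ E, g.natDegree := (Finset.sum_sdiff hEsub).symm
    _ = ∑ g ∈ E, g.natDegree + ∑ g ∈ D \ E, g.natDegree := add_comm _ _
    _ = (1 + (if Odd (Fintype.card F) then 1 else 0)) + ∑ g ∈ D \ E, g.natDegree := by
        rw [hEsum]
    _ = 1 + (if Odd (Fintype.card F) then 1 else 0)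
        + ∑ d ∈ n.divisors.filter (fun d => Odd (n / d)), 2 * d * (SS F d).ncard := by
        rw [← hfiber, Finset.sum_congr rfl hfiberval]

lemma inversion (n : ℕ) (hn : 1 ≤ n) :
    2 * (n : ℝ) * ((SS F n).ncard : ℝ) =
      ∑ d ∈ n.divisors.filter (fun d => Odd d),
        ((ArithmeticFunction.moebius d : ℤ) : ℝ) *
          ((Fintype.card F : ℝ) ^ (n / d) - (if Odd (Fintype.card F) then 1 else 0)) := by
  classical
  set a := n.factorization 2 with ha
  set A := 2 ^ a with hA
  have hApos : 0 < A := by positivity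
  set m := ordCompl[2] n with hm
  have hsplit : A * m = n := Nat.ordProj_mul_ordCompl_eq_self n 2
  have hmodd : Odd m := by
    have h2 : ¬ 2 ∣ m := Nat.not_dvd_ordCompl Nat.prime_two (by omega)
    exact Nat.odd_iff.mpr (Nat.two_dvd_ne_zero.mp h2)
  have hmpos : 0 < m := Nat.ordCompl_pos 2 (by omega)
  set f' : ℕ → ℝ := fun e => 2 * ((A * e : ℕ) : ℝ) * ((SS F (A * e)).ncard : ℝ) with hf'
  set g' : ℕ → ℝ := fun k => (Fintype.card F : ℝ) ^ (A * k)
      - (if Odd (Fintype.card F) then 1 else 0) with hg'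
  have treindex : ∀ k : ℕ, 0 < k → Odd k →
      (A * k).divisors.filter (fun d => Odd ((A * k) / d))
        = k.divisors.image (fun e => A * e) := by
    intro k hk hkodd
    ext d
    simp only [Finset.mem_filter, Nat.mem_divisors, Finset.mem_image]
    constructor
    · rintro ⟨⟨hdvd, hne⟩, hodd⟩
      obtain ⟨c, hc⟩ := hdvd
      have hd0 : 0 < d := by
        rcases Nat.eq_zero_or_pos d with rfl | h
        · rw [zero_mul] at hc; exact absurd hc hne
        · exact h
      have hcdiv : (A * k) / d = c := by
        rw [hc]; exact Nat.mul_div_cancel_left c hd0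
      rw [hcdiv] at hodd
      have hcop : Nat.Coprime A c := by
        rw [hA]
        exact Nat.Coprime.pow_left a
          ((Nat.prime_two.coprime_iff_not_dvd).mpr
            (Nat.two_dvd_ne_zero.mpr (Nat.odd_iff.mp hodd)))
      have hAd : A ∣ d := hcop.dvd_of_dvd_mul_right ⟨k, hc.symm⟩
      refine ⟨d / A, ⟨?_, by omega⟩, Nat.mul_div_cancel' hAd⟩
      have h1 : A * (d / A) ∣ A * k := by
        rw [Nat.mul_div_cancel' hAd]; exact ⟨c, hc⟩
      exact (Nat.mul_dvd_mul_iff_left hApos).mp h1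
    · rintro ⟨e, ⟨hedvd, _⟩, rfl⟩
      have hAk0 : A * k ≠ 0 := by positivity
      refine ⟨⟨mul_dvd_mul_left A hedvd, hAk0⟩, ?_⟩
      rw [Nat.mul_div_mul_left _ _ hApos]
      have hdvd' : (k / e) ∣ k := Nat.div_dvd_of_dvd hedvd
      rcases Nat.even_or_odd (k / e) with hev | hod
      · exfalso
        exact (Nat.not_odd_iff_even.mpr
          ((even_iff_two_dvd).mpr (hev.two_dvd.trans hdvd'))) hkodd
      · exact hod
  have hyp : ∀ k : ℕ, 0 < k → k ∈ {x : ℕ | Odd x} →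
      (∑ e ∈ k.divisors, f' e) = g' k := by
    intro k hk hkodd
    have hid := main_identity (F := F) (A * k) (Nat.one_le_iff_ne_zero.mpr (by positivity))
    have hidR : ((Fintype.card F : ℕ) : ℝ) ^ (A * k)
        = (if Odd (Fintype.card F) then (1 : ℝ) else 0)
          + ∑ x ∈ (A * k).divisors.filter (fun d => Odd ((A * k) / d)),
              2 * (x : ℝ) * ((SS F x).ncard : ℝ) := by
      have hh := congrArg (fun t : ℕ => (t : ℝ)) hid
      push_cast at hh
      split_ifs at hh ⊢ with hcase <;> push_cast at hh <;> linarith [hh]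
    rw [treindex k hk hkodd] at hidR
    rw [Finset.sum_image (fun e1 _ e2 _ h => Nat.eq_of_mul_eq_mul_left hApos h)] at hidR
    simp only [hf', hg']
    rw [hidR]
    push_cast
    ring
  have hs : ∀ x y : ℕ, x ∣ y → y ∈ {z : ℕ | Odd z} → x ∈ {z : ℕ | Odd z} := by
    intro x y hxy hy
    simp only [Set.mem_setOf_eq] at *
    rcases Nat.even_or_odd x with hev | hod
    · exact absurd hy (Nat.not_odd_iff_even.mpr ((even_iff_two_dvd).mpr (hev.two_dvd.trans hxy)))
    · exact hod
  have hinv := (ArithmeticFunction.sum_eq_iff_sum_mul_moebius_eq_on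
    {z : ℕ | Odd z} hs (f := f') (g := g')).mp (fun k hk hks => hyp k hk hks)
  have hm' := hinv m hmpos hmodd
  rw [Nat.sum_divisorsAntidiagonal
    (f := fun x y => ((ArithmeticFunction.moebius x : ℤ) : ℝ) * g' y)] at hm'
  have hfm : f' m = 2 * (n : ℝ) * ((SS F n).ncard : ℝ) := by
    simp only [hf']
    rw [hsplit]
  rw [← hfm, ← hm']
  have hsets : m.divisors = n.divisors.filter (fun d => Odd d) := by
    ext x
    simp only [Nat.mem_divisors, Finset.mem_filter]
    constructor
    · rintro ⟨hxm, _⟩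
      refine ⟨⟨hxm.trans ⟨A, by rw [← hsplit]; ring⟩, by omega⟩, ?_⟩
      rcases Nat.even_or_odd x with hev | hod
      · exact absurd hmodd
          (Nat.not_odd_iff_even.mpr ((even_iff_two_dvd).mpr (hev.two_dvd.trans hxm)))
      · exact hod
    · rintro ⟨⟨hxn, _⟩, hxodd⟩
      refine ⟨?_, by omega⟩
      have hcop : Nat.Coprime x A := by
        rw [hA]
        exact Nat.Coprime.pow_right a
          (Nat.coprime_comm.mp ((Nat.prime_two.coprime_iff_not_dvd).mpr
            (Nat.two_dvd_ne_zero.mpr (Nat.odd_iff.mp hxodd))))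
      rw [← hsplit] at hxn
      exact hcop.dvd_of_dvd_mul_left hxn
  refine Finset.sum_congr hsets ?_
  intro x hx
  rw [Finset.mem_filter, Nat.mem_divisors] at hx
  obtain ⟨⟨hxn, _⟩, hxodd⟩ := hx
  have hxm : x ∣ m := by
    have hcop : Nat.Coprime x A := by
      rw [hA]
      exact Nat.Coprime.pow_right a
        (Nat.coprime_comm.mp ((Nat.prime_two.coprime_iff_not_dvd).mpr
          (Nat.two_dvd_ne_zero.mpr (Nat.odd_iff.mp hxodd))))
    rw [← hsplit] at hxn
    exact hcop.dvd_of_dvd_mul_left hxn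
  have hAx : A * (m / x) = n / x := by
    rw [← hsplit, Nat.mul_div_assoc A hxm]
  simp only [hg']
  rw [hAx]

lemma bound1 (n : ℕ) (hn : 1 ≤ n) :
    2 * n * (SS F n).ncard + (if Odd (Fintype.card F) then 1 else 0) ≤ (Fintype.card F) ^ n := by
  classical
  have h := main_identity (F := F) n hn
  have hmem : n ∈ n.divisors.filter (fun d => Odd (n / d)) := by
    rw [Finset.mem_filter, Nat.mem_divisors]
    refine ⟨⟨dvd_rfl, by omega⟩, ?_⟩
    rw [Nat.div_self (by omega)]
    exact odd_one
  have hle : 2 * n * (SS F n).ncard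
      ≤ ∑ d ∈ n.divisors.filter (fun d => Odd (n / d)), 2 * d * (SS F d).ncard :=
    Finset.single_le_sum (f := fun d => 2 * d * (SS F d).ncard) (fun d _ => Nat.zero_le _) hmem
  generalize hQ : (Fintype.card F) ^ n = Q at h
  generalize hS : (∑ d ∈ n.divisors.filter (fun d => Odd (n / d)), 2 * d * (SS F d).ncard) = S
    at h hle
  generalize hc : 2 * n * (SS F n).ncard = c at hle ⊢
  generalize he : (if Odd (Fintype.card F) then 1 else 0) = e at h ⊢
  omega

lemma geom_bound {q : ℕ} (hq : 2 ≤ q) (M : ℕ) : ∑ d ∈ Finset.Icc 1 M, q ^ d ≤ 2 * q ^ M := by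
  induction M with
  | zero => simp
  | succ M ih =>
    rw [Finset.sum_Icc_succ_top (by omega : 1 ≤ M + 1)]
    have h1 : q ^ (M + 1) = q * q ^ M := by ring
    have h2 : 2 * q ^ M ≤ q * q ^ M := Nat.mul_le_mul_right _ hq
    calc ∑ d ∈ Finset.Icc 1 M, q ^ d + q ^ (M + 1) ≤ 2 * q ^ M + q ^ (M + 1) := by omega
    _ ≤ q * q ^ M + q ^ (M + 1) := by omega
    _ = 2 * q ^ (M + 1) := by rw [h1]; ring

lemma bound2 (n : ℕ) (hn : 1 ≤ n) :
    (Fintype.card F) ^ n ≤ 1 + 2 * n * (SS F n).ncard + 2 * (Fintype.card F) ^ (n / 3) := by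
  classical
  have hq2 : 2 ≤ Fintype.card F := Fintype.one_lt_card
  have h := main_identity (F := F) n hn
  have hmem : n ∈ n.divisors.filter (fun d => Odd (n / d)) := by
    rw [Finset.mem_filter, Nat.mem_divisors]
    refine ⟨⟨dvd_rfl, by omega⟩, ?_⟩
    rw [Nat.div_self (by omega)]
    exact odd_one
  have hsplit : ∑ d ∈ (n.divisors.filter (fun d => Odd (n / d))).erase n,
        2 * d * (SS F d).ncard + 2 * n * (SS F n).ncard
      = ∑ d ∈ n.divisors.filter (fun d => Odd (n / d)), 2 * d * (SS F d).ncard :=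
    Finset.sum_erase_add _ _ hmem
  have hsub : (n.divisors.filter (fun d => Odd (n / d))).erase n ⊆ Finset.Icc 1 (n / 3) := by
    intro d hd
    rw [Finset.mem_erase, Finset.mem_filter, Nat.mem_divisors] at hd
    obtain ⟨hdne, ⟨hdn, _⟩, hodd⟩ := hd
    have hd1 : 1 ≤ d := Nat.pos_of_dvd_of_pos hdn (by omega)
    have hq3 : 3 ≤ n / d := by
      have hne1 : n / d ≠ 1 := by
        intro h1
        apply hdne
        have := Nat.mul_div_cancel' hdn
        rw [h1, mul_one] at this
        omega
      have hne2 : n / d ≠ 2 := by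
        intro h2
        rw [h2] at hodd
        exact (by decide : ¬ Odd 2) hodd
      have hpos : 0 < n / d := Nat.div_pos (Nat.le_of_dvd (by omega) hdn) (by omega)
      omega
    have h3d : 3 * d ≤ n := by
      have := Nat.mul_div_cancel' hdn
      calc 3 * d ≤ (n / d) * d := Nat.mul_le_mul_right d hq3
      _ = n := by rw [mul_comm]; exact this
    rw [Finset.mem_Icc]
    exact ⟨hd1, (Nat.le_div_iff_mul_le (by omega)).mpr (by omega)⟩
  have hbd : ∀ d ∈ (n.divisors.filter (fun d => Odd (n / d))).erase n,
      2 * d * (SS F d).ncard ≤ (Fintype.card F) ^ d := by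
    intro d hd
    rw [Finset.mem_erase, Finset.mem_filter, Nat.mem_divisors] at hd
    have hd1 : 1 ≤ d := Nat.pos_of_dvd_of_pos hd.2.1.1 (by omega)
    have := bound1 (F := F) d hd1
    omega
  have hsum1 : ∑ d ∈ (n.divisors.filter (fun d => Odd (n / d))).erase n,
      2 * d * (SS F d).ncard ≤ ∑ d ∈ (n.divisors.filter (fun d => Odd (n / d))).erase n,
        (Fintype.card F) ^ d := Finset.sum_le_sum hbd
  have hsum2 : ∑ d ∈ (n.divisors.filter (fun d => Odd (n / d))).erase n, (Fintype.card F) ^ d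
      ≤ ∑ d ∈ Finset.Icc 1 (n / 3), (Fintype.card F) ^ d :=
    Finset.sum_le_sum_of_subset hsub
  have hgeo := geom_bound hq2 (n / 3)
  generalize hQ : (Fintype.card F) ^ n = Q at h
  generalize hQ3 : (Fintype.card F) ^ (n / 3) = Q3 at hgeo ⊢
  generalize hS : (∑ d ∈ n.divisors.filter (fun d => Odd (n / d)), 2 * d * (SS F d).ncard) = S
    at h hsplit
  generalize hS' : (∑ d ∈ (n.divisors.filter (fun d => Odd (n / d))).erase n,
      2 * d * (SS F d).ncard) = S' at hsplit hsum1
  generalize hS'' : (∑ d ∈ (n.divisors.filter (fun d => Odd (n / d))).erase n,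
      (Fintype.card F) ^ d) = S'' at hsum1 hsum2
  generalize hS''' : (∑ d ∈ Finset.Icc 1 (n / 3), (Fintype.card F) ^ d) = S''' at hsum2 hgeo
  generalize hc : 2 * n * (SS F n).ncard = c at hsplit ⊢
  generalize he : (if Odd (Fintype.card F) then 1 else 0) = e at h
  have he1 : e ≤ 1 := by rw [← he]; split_ifs <;> omega
  omega

/-- **Prime polynomial theorem for *-symmetric polynomials.**
Apart from `X - 1` and `X + 1`, every *-symmetric monic irreducible polynomial over a finite
field with `q` elements has even degree and constant coefficient `1`; moreover the number of
*-symmetric monic irreducibles of degree `2n` is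
`(1/(2n)) ∑_{odd d ∣ n} μ(d)(q^{n/d} - η)` with `η = 1` for odd `q` and `η = 0` for even `q`,
and equals `(qⁿ - ε q^{n/3})/(2n)` with `0 ≤ ε ≤ 3`. -/
theorem stmt1 (F : Type) [Field F] [Fintype F] (q : ℕ) (hq : Fintype.card F = q) :
    (∀ f : F[X], f.Monic → Irreducible f → IsStarSymm f → f ≠ X - 1 → f ≠ X + 1 →
      Even f.natDegree ∧ f.coeff 0 = 1) ∧
    ∀ n : ℕ, 1 ≤ n →
      (({f : F[X] | f.Monic ∧ Irreducible f ∧ IsStarSymm f ∧ f.natDegree = 2 * n}.ncard : ℝ) =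
        (1 / (2 * (n : ℝ))) * ∑ d ∈ n.divisors.filter (fun d => Odd d),
          (ArithmeticFunction.moebius d : ℝ) *
            ((q : ℝ) ^ (n / d) - (if Odd q then 1 else 0))) ∧
      ∃ ε : ℝ, 0 ≤ ε ∧ ε ≤ 3 ∧
        ({f : F[X] | f.Monic ∧ Irreducible f ∧ IsStarSymm f ∧ f.natDegree = 2 * n}.ncard : ℝ) =
          ((q : ℝ) ^ n - ε * (q : ℝ) ^ ((n : ℝ) / 3)) / (2 * (n : ℝ)) := by
  subst hq
  constructor
  · intro f hmo hirr hss h1 h2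
    obtain ⟨d, hd1, hdeg, _⟩ := starsymm_struct' hmo hirr hss h1 h2
    exact ⟨⟨d, by omega⟩, starsymm_coeff_zero hmo hirr hss h1 h2⟩
  · intro n hn
    have hset : {f : F[X] | f.Monic ∧ Irreducible f ∧ IsStarSymm f ∧ f.natDegree = 2 * n}
        = SS F n := rfl
    have hcardpos : (0 : ℝ) < (Fintype.card F : ℝ) := by
      have : 2 ≤ Fintype.card F := Fintype.one_lt_card
      positivity
    have hcard1 : (1 : ℝ) ≤ (Fintype.card F : ℝ) := by
      have : 2 ≤ Fintype.card F := Fintype.one_lt_card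
      exact_mod_cast by omega
    have hinv := inversion (F := F) n hn
    have h2n : (2 * (n : ℝ)) ≠ 0 := by positivity
    constructor
    · rw [hset, ← hinv]
      field_simp
    · have hQ3pos : (0 : ℝ) < (Fintype.card F : ℝ) ^ ((n : ℝ) / 3) :=
        Real.rpow_pos_of_pos hcardpos _
      refine ⟨((Fintype.card F : ℝ) ^ n - 2 * n * ((SS F n).ncard : ℝ))
        / (Fintype.card F : ℝ) ^ ((n : ℝ) / 3), ?_, ?_, ?_⟩
      · apply div_nonneg _ hQ3pos.le
        have hb := bound1 (F := F) n hn
        have hb' : 2 * n * (SS F n).ncard ≤ (Fintype.card F) ^ n :=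
          le_trans (Nat.le_add_right _ _) hb
        have hbr : 2 * (n : ℝ) * ((SS F n).ncard : ℝ) ≤ (Fintype.card F : ℝ) ^ n := by
          exact_mod_cast hb'
        linarith
      · rw [div_le_iff₀ hQ3pos]
        have hb2 := bound2 (F := F) n hn
        have hcast : ((Fintype.card F : ℝ)) ^ n
            ≤ 1 + 2 * (n : ℝ) * ((SS F n).ncard : ℝ)
              + 2 * ((Fintype.card F : ℝ)) ^ (n / 3 : ℕ) := by
          exact_mod_cast hb2
        have hfloor : ((Fintype.card F : ℝ)) ^ (n / 3 : ℕ)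
            ≤ (Fintype.card F : ℝ) ^ ((n : ℝ) / 3) := by
          rw [← Real.rpow_natCast ((Fintype.card F : ℝ)) (n / 3)]
          apply Real.rpow_le_rpow_of_exponent_le hcard1
          exact_mod_cast Nat.cast_div_le
        have hone : (1 : ℝ) ≤ (Fintype.card F : ℝ) ^ ((n : ℝ) / 3) := by
          have := Real.rpow_le_rpow_of_exponent_le hcard1
            (by positivity : (0 : ℝ) ≤ (n : ℝ) / 3)
          rwa [Real.rpow_zero] at this
        linarith
      · rw [hset, div_mul_cancel₀ _ (ne_of_gt hQ3pos)]
        field_simp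
        ring
end

section
/- Let G be a finite group acting transitively on a nonempty finite set Ω, and let H be a normal subgroup of G. Call an element a derangement if it fixes no point of Ω. Let δ_cc(G, Ω) be the proportion of conjugacy classes of G all of whose elements are derangements (among all conjugacy classes of G), and let δ_cc(H, Ω) be the proportion of conjugacy classes of H all of whose elements are derangements on Ω (among all conjugacy classes of H, where H acts on Ω by restriction). Then δ_cc(G, Ω) ≥ δ_cc(H, Ω)/[G : H]². -/
open Subgroup

variable {G : Type} [Group G] [Finite G]

/-- Key: the centralizer of `x` in `G` is at most `[G:H]` times its intersection with `H`. -/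
lemma key_central (H : Subgroup G) (hH : H.Normal) (x : G) :
    Nat.card {y : G // Commute x y} ≤ H.index * Nat.card {h : H // Commute x (h : G)} := by
  set K : Subgroup G := Subgroup.centralizer {x} with hK
  have e1 : {y : G // Commute x y} ≃ K :=
    Equiv.subtypeEquivRight fun y => by
      simp [hK, Subgroup.mem_centralizer_iff, Commute, SemiconjBy]
  set J : Subgroup K := H.subgroupOf K with hJ
  have e2 : {h : H // Commute x (h : G)} ≃ J :=
    { toFun := fun h => ⟨⟨(h : H), by
        simp [hK, Subgroup.mem_centralizer_iff]
        exact h.2⟩, h.1.2⟩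
      invFun := fun k => ⟨⟨(k : K), k.2⟩, by
        have hk : ((k : K) : G) ∈ Subgroup.centralizer {x} := (k : K).2
        rw [Subgroup.mem_centralizer_iff] at hk
        exact hk x rfl⟩
      left_inv := fun h => rfl
      right_inv := fun k => rfl }
  have h1 : Nat.card {y : G // Commute x y} = Nat.card J * J.index := by
    rw [Nat.card_congr e1, J.card_mul_index]
  have h2 : J.index ≤ H.index := by
    have : J.index = H.relIndex K := rfl
    rw [this]
    exact Nat.le_of_dvd (Nat.pos_of_ne_zero H.index_ne_zero_of_finite)
      (relIndex_dvd_index_of_normal H K)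
  rw [h1, Nat.card_congr e2]
  calc Nat.card J * J.index ≤ Nat.card J * H.index := Nat.mul_le_mul_left _ h2
    _ = H.index * Nat.card J := Nat.mul_comm _ _

lemma classes_le (H : Subgroup G) (hH : H.Normal) :
    Nat.card (ConjClasses G) ≤ H.index * Nat.card (ConjClasses H) := by
  classical
  letI : Fintype G := Fintype.ofFinite G
  letI : Fintype H := Fintype.ofFinite H
  set m := H.index with hm
  -- Step 1 : CP(G) ≤ m * M
  have h1 : Nat.card {p : G × G // Commute p.1 p.2} ≤
      m * Nat.card {p : G × H // Commute p.1 (p.2 : G)} := by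
    rw [Nat.card_congr (Equiv.subtypeProdEquivSigmaSubtype fun x (y : G) => Commute x y),
      Nat.card_congr (Equiv.subtypeProdEquivSigmaSubtype fun x (h : H) => Commute x (h : G)),
      Nat.card_eq_fintype_card, Nat.card_eq_fintype_card, Fintype.card_sigma,
      Fintype.card_sigma, Finset.mul_sum]
    refine Finset.sum_le_sum fun x _ => ?_
    simpa [Nat.card_eq_fintype_card] using key_central H hH x
  -- swap the factors
  have eswap : {p : G × H // Commute p.1 (p.2 : G)} ≃ {p : H × G // Commute (p.1 : G) p.2} :=
    { toFun := fun p => ⟨(p.1.2, p.1.1), p.2.symm⟩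
      invFun := fun p => ⟨(p.1.2, p.1.1), p.2.symm⟩
      left_inv := fun ⟨⟨a, b⟩, h⟩ => rfl
      right_inv := fun ⟨⟨a, b⟩, h⟩ => rfl }
  -- Step 2 : M ≤ m * CP(H)
  have h2 : Nat.card {p : G × H // Commute p.1 (p.2 : G)} ≤
      m * Nat.card {p : H × H // Commute p.1 p.2} := by
    have ecoe : {p : H × H // Commute ((p.1 : H) : G) ((p.2 : H) : G)} ≃
        {p : H × H // Commute p.1 p.2} :=
      Equiv.subtypeEquivRight fun p => by
        simp [Commute, SemiconjBy, Subtype.ext_iff]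
    rw [Nat.card_congr eswap, ← Nat.card_congr ecoe,
      Nat.card_congr (Equiv.subtypeProdEquivSigmaSubtype fun (h : H) (y : G) => Commute (h : G) y),
      Nat.card_congr (Equiv.subtypeProdEquivSigmaSubtype fun (h k : H) => Commute (h : G) (k : G)),
      Nat.card_eq_fintype_card, Nat.card_eq_fintype_card, Fintype.card_sigma,
      Fintype.card_sigma, Finset.mul_sum]
    refine Finset.sum_le_sum fun h _ => ?_
    simpa [Nat.card_eq_fintype_card] using key_central H hH (h : G)
  have hCP : Nat.card {p : G × G // Commute p.1 p.2} ≤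
      m * (m * Nat.card {p : H × H // Commute p.1 p.2}) :=
    h1.trans (Nat.mul_le_mul_left m h2)
  rw [card_comm_eq_card_conjClasses_mul_card, card_comm_eq_card_conjClasses_mul_card] at hCP
  have hG : Nat.card H * H.index = Nat.card G := H.card_mul_index
  have hGpos : 0 < Nat.card G := Nat.card_pos
  refine Nat.le_of_mul_le_mul_right ?_ hGpos
  calc Nat.card (ConjClasses G) * Nat.card G
      ≤ m * (m * (Nat.card (ConjClasses H) * Nat.card H)) := hCP
    _ = m * Nat.card (ConjClasses H) * (Nat.card H * m) := by ring
    _ = m * Nat.card (ConjClasses H) * Nat.card G := by rw [hm, hG]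

lemma fiber_card_le (H : Subgroup G) (hH : H.Normal) (c' : ConjClasses G) :
    Nat.card {c : ConjClasses H // ConjClasses.map H.subtype c = c'} ≤ H.index := by
  classical
  rcases isEmpty_or_nonempty {c : ConjClasses H // ConjClasses.map H.subtype c = c'} with
    he | ⟨⟨c₀, hc₀⟩⟩
  · rw [Nat.card_of_isEmpty]; exact Nat.zero_le _
  obtain ⟨h₀, hh₀⟩ := ConjClasses.exists_rep c₀
  have hmap : ∀ h : H, ConjClasses.map H.subtype (ConjClasses.mk h) = ConjClasses.mk (h : G) :=
    fun h => rfl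
  have key : ∀ g : G,
      ConjClasses.map H.subtype
        (ConjClasses.mk (⟨g * (h₀ : G) * g⁻¹, hH.conj_mem _ h₀.2 g⟩ : H)) = c' := by
    intro g
    rw [hmap]
    have h1 : ConjClasses.mk (g * (h₀ : G) * g⁻¹) = ConjClasses.mk ((h₀ : G)) :=
      ConjClasses.mk_eq_mk_iff_isConj.mpr (isConj_iff.mpr ⟨g, rfl⟩).symm
    rw [h1, ← hmap h₀, hh₀, hc₀]
  set ft : G → {c : ConjClasses H // ConjClasses.map H.subtype c = c'} :=
    fun g => ⟨ConjClasses.mk (⟨g * (h₀ : G) * g⁻¹, hH.conj_mem _ h₀.2 g⟩ : H), key g⟩ with hft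
  have hresp : ∀ a b : G, QuotientGroup.leftRel H a b → ft a = ft b := by
    intro a b hr
    rw [QuotientGroup.leftRel_apply] at hr
    have humem : b * a⁻¹ ∈ H := by
      have h2 := hH.conj_mem _ hr a
      rwa [show a * (a⁻¹ * b) * a⁻¹ = b * a⁻¹ by group] at h2
    apply Subtype.ext
    show ConjClasses.mk _ = ConjClasses.mk _
    refine ConjClasses.mk_eq_mk_iff_isConj.mpr (isConj_iff.mpr ⟨⟨b * a⁻¹, humem⟩, ?_⟩)
    apply Subtype.ext
    push_cast
    group
  let fbar : G ⧸ H → {c : ConjClasses H // ConjClasses.map H.subtype c = c'} :=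
    Quotient.lift ft hresp
  have hsurj : Function.Surjective fbar := by
    rintro ⟨c, hc⟩
    obtain ⟨h, hh⟩ := ConjClasses.exists_rep c
    have : ConjClasses.mk ((h₀ : G)) = ConjClasses.mk ((h : G)) := by
      rw [← hmap, ← hmap, hh₀, hh, hc₀, hc]
    obtain ⟨u, hu⟩ := isConj_iff.mp (ConjClasses.mk_eq_mk_iff_isConj.mp this)
    refine ⟨Quotient.mk _ u, ?_⟩
    show ft u = _
    apply Subtype.ext
    show ConjClasses.mk _ = c
    rw [show (⟨u * (h₀ : G) * u⁻¹, hH.conj_mem _ h₀.2 u⟩ : H) = h from Subtype.ext hu, hh]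
  calc Nat.card {c : ConjClasses H // ConjClasses.map H.subtype c = c'}
      ≤ Nat.card (G ⧸ H) := Nat.card_le_card_of_surjective fbar hsurj
    _ = H.index := rfl

lemma derangement_classes_le (Ω : Type) [Finite Ω] [MulAction G Ω]
    (H : Subgroup G) (hH : H.Normal) :
    {c : ConjClasses H | ∀ h ∈ ConjClasses.carrier c, ∀ ω : Ω, (h : G) • ω ≠ ω}.ncard ≤
      H.index *
        {c : ConjClasses G | ∀ g ∈ ConjClasses.carrier c, ∀ ω : Ω, g • ω ≠ ω}.ncard := by
  classical
  letI : Fintype (ConjClasses H) := Fintype.ofFinite _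
  letI : Fintype (ConjClasses G) := Fintype.ofFinite _
  rw [Set.ncard_eq_toFinset_card', Set.ncard_eq_toFinset_card']
  refine Finset.card_le_mul_card_image_of_maps_to (f := ConjClasses.map H.subtype)
    ?_ H.index ?_
  · -- the image of a derangement class is a derangement class
    intro c hc
    simp only [Set.mem_toFinset, Set.mem_setOf_eq] at hc ⊢
    obtain ⟨h, rfl⟩ := ConjClasses.exists_rep c
    intro g hg ω hω
    have hg' : ConjClasses.mk g = ConjClasses.mk ((h : G)) := by
      rw [ConjClasses.mem_carrier_iff_mk_eq] at hg
      exact hg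
    obtain ⟨u, hu⟩ := isConj_iff.mp (ConjClasses.mk_eq_mk_iff_isConj.mp hg')
    have hmem : h ∈ ConjClasses.carrier (ConjClasses.mk h) :=
      ConjClasses.mem_carrier_iff_mk_eq.mpr rfl
    refine hc h hmem (u • ω) ?_
    calc (h : G) • u • ω = (u * g * u⁻¹) • u • ω := by rw [hu]
      _ = u • g • ω := by rw [← mul_smul, ← mul_smul, inv_mul_cancel_right]
      _ = u • ω := by rw [hω]
  · -- fibers have size at most the index
    intro c' _
    calc (Finset.filter (fun c => ConjClasses.map H.subtype c = c') _).card
        ≤ (Finset.filter (fun c => ConjClasses.map H.subtype c = c') Finset.univ).card :=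
          Finset.card_le_card (Finset.filter_subset_filter _ (Finset.subset_univ _))
      _ = Fintype.card {c : ConjClasses H // ConjClasses.map H.subtype c = c'} :=
          (Fintype.card_subtype _).symm
      _ = Nat.card {c : ConjClasses H // ConjClasses.map H.subtype c = c'} :=
          (Nat.card_eq_fintype_card).symm
      _ ≤ H.index := fiber_card_le H hH c'

/-- **Passing to a normal subgroup for derangement classes.**
Let `G` be a finite group acting transitively on a nonempty finite set `Ω` and let `H` be a
normal subgroup of `G` (acting by restriction).  Then the proportion of conjugacy classes of
`G` consisting entirely of derangements is at least the corresponding proportion for `H`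
divided by `[G : H]²`. -/
theorem stmt17 (G : Type) [Group G] [Finite G] (Ω : Type) [Finite Ω] [Nonempty Ω]
    [MulAction G Ω] (htrans : MulAction.IsPretransitive G Ω)
    (H : Subgroup G) (hH : H.Normal) :
    (({c : ConjClasses H | ∀ h ∈ ConjClasses.carrier c, ∀ ω : Ω, (h : G) • ω ≠ ω}.ncard : ℝ) /
        (Nat.card (ConjClasses H) : ℝ)) / ((H.index : ℝ) ^ 2) ≤
      ({c : ConjClasses G | ∀ g ∈ ConjClasses.carrier c, ∀ ω : Ω, g • ω ≠ ω}.ncard : ℝ) /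
        (Nat.card (ConjClasses G) : ℝ) := by
  set dH := {c : ConjClasses H | ∀ h ∈ ConjClasses.carrier c, ∀ ω : Ω, (h : G) • ω ≠ ω}.ncard
  set dG := {c : ConjClasses G | ∀ g ∈ ConjClasses.carrier c, ∀ ω : Ω, g • ω ≠ ω}.ncard
  set kH := Nat.card (ConjClasses H)
  set kG := Nat.card (ConjClasses G)
  set m := H.index with hm
  have hmpos : 0 < m := Nat.pos_of_ne_zero H.index_ne_zero_of_finite
  have hkHpos : 0 < kH := Nat.card_pos
  have hkGpos : 0 < kG := Nat.card_pos
  have hd : dH ≤ m * dG := derangement_classes_le Ω H hH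
  have hk : kG ≤ m * kH := classes_le H hH
  rw [div_div, div_le_div_iff₀ (by positivity) (by positivity)]
  have hd' : (dH : ℝ) ≤ (m : ℝ) * dG := by exact_mod_cast Nat.cast_le.mpr hd
  have hk' : (kG : ℝ) ≤ (m : ℝ) * kH := by exact_mod_cast Nat.cast_le.mpr hk
  calc (dH : ℝ) * kG ≤ ((m : ℝ) * dG) * ((m : ℝ) * kH) :=
        mul_le_mul hd' hk' (by positivity) (by positivity)
    _ = (dG : ℝ) * ((kH : ℝ) * (m : ℝ) ^ 2) := by ring
end
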